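/- Let f : ℝ → ℝ be differentiable on an open interval containing [a, b], where a < b, and suppose f' is integrable on [a, b]. Then (f(a) + f(b))/2 − (1/(b−a)) ∫_a^b f(x) dx = ((b−a)/2) ∫_0^1 ∫_0^1 ( f'(t·a + (1−t)·b) − f'(u·a + (1−u)·b) ) (u − t) dt du. -/

import Mathlib

open MeasureTheory

open intervalIntegral in
lemma aux_integral_id01 : (∫ x in (0:ℝ)..1, x) = 1 / 2 := by
  rw [integral_id]; norm_num

lemma aux_intId : IntervalIntegrable (fun x : ℝ => x) volume 0 1 :=
  continuous_id.intervalIntegrable 0 1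

/-- Double-integral trapezoid identity (Lemma 2): if `f` is differentiable on an open
interval `(c, d)` containing `[a, b]` with derivative `f'` integrable on `[a, b]`, then
`(f a + f b)/2 - (1/(b-a)) ∫_a^b f
  = ((b-a)/2) ∫_0^1 ∫_0^1 (f'(ta + (1-t)b) - f'(ua + (1-u)b)) (u - t) dt du`. -/
theorem trapezoid_double_integral_identity (f f' : ℝ → ℝ) (a b c d : ℝ) (hab : a < b)
    (hc : c < a) (hd : b < d)
    (hdiff : ∀ x ∈ Set.Ioo c d, HasDerivAt f (f' x) x)
    (hint : IntervalIntegrable f' volume a b) :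
    (f a + f b) / 2 - (1 / (b - a)) * ∫ x in a..b, f x
      = ((b - a) / 2) *
          ∫ u in (0:ℝ)..1, ∫ t in (0:ℝ)..1,
            (f' (t * a + (1 - t) * b) - f' (u * a + (1 - u) * b)) * (u - t) := by
  have hs : a - b ≠ 0 := by linarith
  have key : ∀ t : ℝ, t * a + (1 - t) * b = (a - b) * t + b := fun t => by ring
  set g : ℝ → ℝ := fun t => f' ((a - b) * t + b) with hgdef
  -- integrability of g on [0,1]
  have hgint : IntervalIntegrable g volume 0 1 := by
    have h1 : IntervalIntegrable (fun x => f' (x + b)) volume (a - b) (b - b) :=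
      hint.comp_add_right b
    have h2 := h1.comp_mul_left (c := a - b)
    simpa [hs, sub_self] using h2.symm
  have htg : IntervalIntegrable (fun t => t * g t) volume 0 1 :=
    hgint.continuousOn_mul continuous_id.continuousOn
  set A : ℝ := ∫ t in (0:ℝ)..1, g t with hAdef
  set B : ℝ := ∫ t in (0:ℝ)..1, t * g t with hBdef
  -- membership of the affine image
  have hmem : ∀ t ∈ Set.uIcc (0:ℝ) 1, (a - b) * t + b ∈ Set.Ioo c d := by
    intro t ht
    rw [Set.uIcc_of_le (by norm_num : (0:ℝ) ≤ 1)] at ht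
    obtain ⟨h0, h1⟩ := ht
    constructor <;> nlinarith
  -- derivative of t ↦ f ((a-b)t + b)
  have hφ : ∀ t ∈ Set.uIcc (0:ℝ) 1,
      HasDerivAt (fun t => f ((a - b) * t + b)) ((a - b) * g t) t := by
    intro t ht
    have h1 : HasDerivAt (fun t : ℝ => (a - b) * t + b) (a - b) t := by
      simpa using ((hasDerivAt_id t).const_mul (a - b)).add_const b
    have h2 := (hdiff _ (hmem t ht)).comp t h1
    rw [mul_comm]
    exact h2
  -- FTC on [a,b]
  have hftc : (∫ x in a..b, f' x) = f b - f a := by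
    apply intervalIntegral.integral_eq_sub_of_hasDerivAt _ hint
    intro x hx
    rw [Set.uIcc_of_le hab.le] at hx
    exact hdiff x ⟨lt_of_lt_of_le hc hx.1, lt_of_le_of_lt hx.2 hd⟩
  -- value of A
  have h0 : (a - b) * 0 + b = b := by ring
  have h1 : (a - b) * 1 + b = a := by ring
  have hA : A = (f a - f b) / (a - b) := by
    rw [hAdef, hgdef]
    rw [intervalIntegral.integral_comp_mul_add f' hs b, h0, h1,
      intervalIntegral.integral_symm, hftc]
    rw [smul_eq_mul]
    field_simp
    ring
  -- integral of f ∘ affine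
  have hφint : (∫ t in (0:ℝ)..1, f ((a - b) * t + b))
      = (a - b)⁻¹ * (-(∫ x in a..b, f x)) := by
    rw [intervalIntegral.integral_comp_mul_add f hs b, h0, h1,
      intervalIntegral.integral_symm]
    simp [smul_eq_mul]
  -- value of B by parts
  have hB : (a - b) * B = f a - (a - b)⁻¹ * (-(∫ x in a..b, f x)) := by
    have hparts := intervalIntegral.integral_mul_deriv_eq_deriv_mul
      (u := fun t : ℝ => t) (u' := fun _ => (1:ℝ))
      (v := fun t => f ((a - b) * t + b)) (v' := fun t => (a - b) * g t)
      (fun x _ => hasDerivAt_id x) hφ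
      intervalIntegrable_const (hgint.const_mul (a - b))
    have hlhs : (∫ t in (0:ℝ)..1, t * ((a - b) * g t)) = (a - b) * B := by
      rw [hBdef, ← intervalIntegral.integral_const_mul]
      congr 1; ext t; ring
    rw [hlhs] at hparts
    simp only [one_mul, zero_mul, mul_one, sub_zero] at hparts
    rw [hparts, hφint]
    norm_num
  -- inner integral computation
  have hinner : ∀ u : ℝ, (∫ t in (0:ℝ)..1, (g t - g u) * (u - t))
      = u * A - B - g u * u + g u / 2 := by
    intro u
    have hrw : ∀ t : ℝ, (g t - g u) * (u - t)
        = u * g t - t * g t - (g u * u - g u * t) := fun t => by ring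
    simp_rw [hrw]
    rw [intervalIntegral.integral_sub (((hgint.const_mul u).sub htg))
        ((intervalIntegrable_const).sub
          ((aux_intId.const_mul (g u)))),
      intervalIntegral.integral_sub (hgint.const_mul u) htg,
      intervalIntegral.integral_sub intervalIntegrable_const
        (aux_intId.const_mul (g u))]
    simp only [intervalIntegral.integral_const_mul, intervalIntegral.integral_const,
      aux_integral_id01, smul_eq_mul, ← hAdef, ← hBdef]
    rw [intervalIntegral.integral_const_mul, aux_integral_id01]
    ring
  -- outer integral
  have houter : (∫ u in (0:ℝ)..1, ∫ t in (0:ℝ)..1, (g t - g u) * (u - t)) = A - 2 * B := by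
    simp_rw [hinner]
    have h1 : IntervalIntegrable (fun u : ℝ => u * A) volume 0 1 :=
      aux_intId.mul_const A
    have h2 : IntervalIntegrable (fun u : ℝ => g u * u) volume 0 1 := by
      simpa [mul_comm] using htg
    rw [intervalIntegral.integral_add ((h1.sub intervalIntegrable_const).sub h2)
        (hgint.div_const 2),
      intervalIntegral.integral_sub (h1.sub intervalIntegrable_const) h2,
      intervalIntegral.integral_sub h1 intervalIntegrable_const]
    have e1 : (∫ u in (0:ℝ)..1, u * A) = A / 2 := by
      rw [intervalIntegral.integral_mul_const, aux_integral_id01]; ring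
    have e2 : (∫ u in (0:ℝ)..1, g u * u) = B := by
      rw [hBdef]; congr 1; ext u; ring
    have e3 : (∫ u in (0:ℝ)..1, g u / 2) = A / 2 := by
      rw [intervalIntegral.integral_div, hAdef]
    rw [e1, e2, e3]
    simp
    ring
  -- assemble
  have hgoal : (∫ u in (0:ℝ)..1, ∫ t in (0:ℝ)..1,
      (f' (t * a + (1 - t) * b) - f' (u * a + (1 - u) * b)) * (u - t)) = A - 2 * B := by
    rw [← houter]
    simp_rw [key]
    rfl
  rw [hgoal]
  have hBval : B = (f a - (a - b)⁻¹ * (-(∫ x in a..b, f x))) / (a - b) := by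
    field_simp at hB ⊢
    linarith [hB]
  have hs2 : b - a ≠ 0 := by linarith
  rw [hA, hBval]
  field_simp
  ring
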